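/- Let 0<λ₁<λ₂, Θ=(λ₁,λ₂), c>0, Δ>0, n≥1. Let D={(x,y): x²+y²<c²Δ²}, u(x,y)=c²Δ²−x²−y², p_λ(x,y) = (λ/(2πc)) e^{−λΔ+(λ/c)√(u(x,y))}/√(u(x,y)), and for w=(w₁,…,wₙ)∈Dⁿ let q_λ(w)=∏_{i=1}^n p_λ(w_i). Let T: (ℝ²)ⁿ → ℝ be measurable with ∫_{Dⁿ} T(w)² q_λ(w) dw < ∞ for every λ∈Θ. Then the map λ ↦ ∫_{Dⁿ} T(w) q_λ(w) dw is differentiable on Θ, with derivative ∫_{Dⁿ} T(w) q_λ(w) (n/λ − nΔ + (1/c) Σ_{i=1}^n √(u(w_i))) dw. -/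

import Mathlib

open MeasureTheory Real Set


open MeasureTheory Real

/-- The absolutely continuous density of a planar random flight at time step `Δ`,
speed `c` and Poisson rate `μ`, evaluated at the point `q` of the open disc of
radius `cΔ`. -/
noncomputable def prfDensity (c Δ μ : ℝ) (q : ℝ × ℝ) : ℝ :=
  μ / (2 * π * c) *
    Real.exp (-μ * Δ + μ / c * Real.sqrt (c ^ 2 * Δ ^ 2 - q.1 ^ 2 - q.2 ^ 2)) /
      Real.sqrt (c ^ 2 * Δ ^ 2 - q.1 ^ 2 - q.2 ^ 2)


lemma aux_deriv_arcsin_div (r : ℝ) (hr : 0 < r) (y : ℝ) (hy : y ∈ Ioo (-r) r) :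
    HasDerivAt (fun y : ℝ => arcsin (y / r)) (1 / Real.sqrt (r ^ 2 - y ^ 2)) y := by
  have h1 : y / r ≠ -1 := by
    have : -1 < y / r := by rw [lt_div_iff₀ hr]; linarith [hy.1]
    linarith
  have h2 : y / r ≠ 1 := by
    have : y / r < 1 := by rw [div_lt_one hr]; exact hy.2
    linarith
  have h := (Real.hasDerivAt_arcsin h1 h2).comp y ((hasDerivAt_id y).div_const r)
  refine h.congr_deriv ?_
  have hs : Real.sqrt (r ^ 2 - y ^ 2) = r * Real.sqrt (1 - (y / r) ^ 2) := by
    rw [← Real.sqrt_sq hr.le, ← Real.sqrt_mul (by positivity)]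
    congr 1
    field_simp
    rw [Real.sqrt_sq hr.le]
  have hpos : 0 < Real.sqrt (r ^ 2 - y ^ 2) := by
    have : y ^ 2 < r ^ 2 := sq_lt_sq' hy.1 hy.2
    have : 0 < r ^ 2 - y ^ 2 := by linarith
    positivity
  rw [hs]
  field_simp

lemma aux_int_one_div_sqrt (r : ℝ) (hr : 0 < r) :
    IntegrableOn (fun y : ℝ => 1 / Real.sqrt (r ^ 2 - y ^ 2)) (Ioo (-r) r) ∧
      ∫ y in Ioo (-r) r, 1 / Real.sqrt (r ^ 2 - y ^ 2) = π := by
  have hcont : ContinuousOn (fun y : ℝ => arcsin (y / r)) (Icc (-r) r) :=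
    (Real.continuous_arcsin.comp (continuous_id.div_const r)).continuousOn
  have hint : IntegrableOn (fun y : ℝ => 1 / Real.sqrt (r ^ 2 - y ^ 2)) (Ioc (-r) r) :=
    intervalIntegral.integrableOn_deriv_of_nonneg hcont (aux_deriv_arcsin_div r hr)
      (fun x _ => by positivity)
  have hintOo : IntegrableOn (fun y : ℝ => 1 / Real.sqrt (r ^ 2 - y ^ 2)) (Ioo (-r) r) :=
    hint.mono_set Ioo_subset_Ioc_self
  refine ⟨hintOo, ?_⟩
  have hab : (-r : ℝ) < r := by linarith
  have hii : IntervalIntegrable (fun y : ℝ => 1 / Real.sqrt (r ^ 2 - y ^ 2)) volume (-r) r := by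
    rw [intervalIntegrable_iff_integrableOn_Ioc_of_le hab.le]; exact hint
  have ha : Filter.Tendsto (fun y : ℝ => arcsin (y / r)) (nhdsWithin (-r) (Ioi (-r)))
      (nhds (-(π/2))) := by
    have := (Real.continuous_arcsin.comp (continuous_id.div_const r)).tendsto (-r)
    simp only [Function.comp, id] at this
    rw [show (-r) / r = -1 by field_simp, Real.arcsin_neg_one] at this
    exact this.mono_left nhdsWithin_le_nhds
  have hb : Filter.Tendsto (fun y : ℝ => arcsin (y / r)) (nhdsWithin r (Iio r))
      (nhds (π/2)) := by
    have := (Real.continuous_arcsin.comp (continuous_id.div_const r)).tendsto r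
    simp only [Function.comp, id] at this
    rw [show r / r = 1 by field_simp, Real.arcsin_one] at this
    exact this.mono_left nhdsWithin_le_nhds
  have hval := intervalIntegral.integral_eq_sub_of_hasDerivAt_of_tendsto hab
    (aux_deriv_arcsin_div r hr) hii ha hb
  rw [intervalIntegral.integral_of_le hab.le, integral_Ioc_eq_integral_Ioo] at hval
  rw [hval]; ring

lemma aux_disc_measurableSet (R : ℝ) :
    MeasurableSet {q : ℝ × ℝ | q.1 ^ 2 + q.2 ^ 2 < R ^ 2} :=
  measurableSet_lt (by fun_prop) measurable_const

lemma aux_int_disc (R : ℝ) (hR : 0 < R) :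
    IntegrableOn (fun q : ℝ × ℝ => 1 / Real.sqrt (R ^ 2 - q.1 ^ 2 - q.2 ^ 2))
      {q : ℝ × ℝ | q.1 ^ 2 + q.2 ^ 2 < R ^ 2} := by
  set S : Set (ℝ × ℝ) := {q : ℝ × ℝ | q.1 ^ 2 + q.2 ^ 2 < R ^ 2} with hS
  have hSm : MeasurableSet S := aux_disc_measurableSet R
  rw [← integrable_indicator_iff hSm]
  set f : ℝ × ℝ → ℝ :=
    S.indicator (fun q : ℝ × ℝ => 1 / Real.sqrt (R ^ 2 - q.1 ^ 2 - q.2 ^ 2)) with hf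
  have hfmeas : Measurable f := by
    apply Measurable.indicator _ hSm
    fun_prop
  have hfnonneg : ∀ p, 0 ≤ f p := by
    intro p
    apply Set.indicator_nonneg
    intro q _; positivity
  -- slice description
  have hslice : ∀ x : ℝ, (fun y => f (x, y)) =
      (Ioo (-Real.sqrt (R ^ 2 - x ^ 2)) (Real.sqrt (R ^ 2 - x ^ 2))).indicator
        (fun y => 1 / Real.sqrt (Real.sqrt (R ^ 2 - x ^ 2) ^ 2 - y ^ 2)) := by
    intro x
    funext y
    rw [hf]
    set r := Real.sqrt (R ^ 2 - x ^ 2) with hr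
    by_cases hx : x ^ 2 < R ^ 2
    · have h1 : 0 < R ^ 2 - x ^ 2 := by linarith
      have hr2 : r ^ 2 = R ^ 2 - x ^ 2 := Real.sq_sqrt h1.le
      have hrpos : 0 < r := Real.sqrt_pos.mpr h1
      have hmem : (x, y) ∈ S ↔ y ∈ Ioo (-r) r := by
        simp only [hS, mem_setOf_eq, mem_Ioo]
        constructor
        · intro h
          have hy2 : y ^ 2 < r ^ 2 := by rw [hr2]; linarith
          constructor <;> nlinarith
        · intro h
          have : y ^ 2 < r ^ 2 := sq_lt_sq' h.1 h.2
          rw [hr2] at this; linarith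
      by_cases hy : y ∈ Ioo (-r) r
      · rw [Set.indicator_of_mem ((hmem.mpr hy)), Set.indicator_of_mem hy, hr2]
      · rw [Set.indicator_of_notMem (fun h => hy (hmem.mp h)), Set.indicator_of_notMem hy]
    · have h1 : R ^ 2 - x ^ 2 ≤ 0 := by linarith
      have hr0 : r = 0 := Real.sqrt_eq_zero_of_nonpos h1
      have hnot : (x, y) ∉ S := by
        simp only [hS, mem_setOf_eq, not_lt]
        nlinarith [sq_nonneg y]
      rw [Set.indicator_of_notMem hnot, Set.indicator_of_notMem]
      rw [hr0]; simp
  -- marginal description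
  have hmarg : (fun x => ∫ y, ‖f (x, y)‖) = (Ioo (-R) R).indicator (fun _ => π) := by
    funext x
    have hnorm : (fun y => ‖f (x, y)‖) = fun y => f (x, y) := by
      funext y; exact Real.norm_of_nonneg (hfnonneg _)
    rw [hnorm, hslice x]
    set r := Real.sqrt (R ^ 2 - x ^ 2) with hr
    by_cases hx : x ∈ Ioo (-R) R
    · have h1 : 0 < R ^ 2 - x ^ 2 := by
        obtain ⟨hx1, hx2⟩ := hx; nlinarith
      have hrpos : 0 < r := Real.sqrt_pos.mpr h1
      rw [Set.indicator_of_mem hx]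
      rw [integral_indicator measurableSet_Ioo]
      exact (aux_int_one_div_sqrt r hrpos).2
    · have h1 : R ^ 2 - x ^ 2 ≤ 0 := by
        simp only [mem_Ioo, not_and_or, not_lt] at hx
        rcases hx with h | h <;> nlinarith
      have hr0 : r = 0 := Real.sqrt_eq_zero_of_nonpos h1
      rw [Set.indicator_of_notMem hx, hr0]
      simp
  rw [show (volume : Measure (ℝ × ℝ)) = (volume : Measure ℝ).prod volume from rfl,
    integrable_prod_iff hfmeas.aestronglyMeasurable]
  constructor
  · apply Filter.Eventually.of_forall
    intro x
    rw [hslice x]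
    set r := Real.sqrt (R ^ 2 - x ^ 2) with hr
    rw [integrable_indicator_iff measurableSet_Ioo]
    by_cases hrpos : 0 < r
    · exact (aux_int_one_div_sqrt r hrpos).1
    · have : r = 0 := le_antisymm (not_lt.mp hrpos) (Real.sqrt_nonneg _)
      rw [this]
      simp [IntegrableOn]
  · rw [hmarg, integrable_indicator_iff measurableSet_Ioo]
    exact integrableOn_const measure_Ioo_lt_top.ne

lemma aux_prf_meas (c Δ a : ℝ) : Measurable (prfDensity c Δ a) := by
  unfold prfDensity; fun_prop

lemma aux_prf_nonneg (c Δ a : ℝ) (hc : 0 < c) (ha : 0 ≤ a) (q : ℝ × ℝ) :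
    0 ≤ prfDensity c Δ a q := by
  unfold prfDensity
  have := Real.pi_pos
  positivity

lemma aux_sqrt_le (c Δ : ℝ) (hc : 0 < c) (hΔ : 0 < Δ) (q : ℝ × ℝ) :
    Real.sqrt (c ^ 2 * Δ ^ 2 - q.1 ^ 2 - q.2 ^ 2) ≤ c * Δ := by
  have h : c ^ 2 * Δ ^ 2 - q.1 ^ 2 - q.2 ^ 2 ≤ (c * Δ) ^ 2 := by nlinarith [sq_nonneg q.1, sq_nonneg q.2]
  calc Real.sqrt (c ^ 2 * Δ ^ 2 - q.1 ^ 2 - q.2 ^ 2) ≤ Real.sqrt ((c * Δ) ^ 2) :=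
        Real.sqrt_le_sqrt h
    _ = c * Δ := Real.sqrt_sq (by positivity)

/-- L1 : the density is integrable on the disc. -/
lemma aux_L1 (c Δ a : ℝ) (hc : 0 < c) (hΔ : 0 < Δ) (ha : 0 < a) :
    IntegrableOn (prfDensity c Δ a) {q : ℝ × ℝ | q.1 ^ 2 + q.2 ^ 2 < c ^ 2 * Δ ^ 2} := by
  have hset : {q : ℝ × ℝ | q.1 ^ 2 + q.2 ^ 2 < c ^ 2 * Δ ^ 2} =
      {q : ℝ × ℝ | q.1 ^ 2 + q.2 ^ 2 < (c * Δ) ^ 2} := by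
    simp only [mul_pow]
  have hdisc : IntegrableOn (fun q : ℝ × ℝ => 1 / Real.sqrt (c ^ 2 * Δ ^ 2 - q.1 ^ 2 - q.2 ^ 2))
      {q : ℝ × ℝ | q.1 ^ 2 + q.2 ^ 2 < c ^ 2 * Δ ^ 2} := by
    rw [hset]
    have := aux_int_disc (c * Δ) (by positivity)
    simpa only [mul_pow] using this
  have hSm : MeasurableSet {q : ℝ × ℝ | q.1 ^ 2 + q.2 ^ 2 < c ^ 2 * Δ ^ 2} := by
    rw [hset]; exact aux_disc_measurableSet (c * Δ)
  apply Integrable.mono' (hdisc.const_mul (a / (2 * π * c)))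
    ((aux_prf_meas c Δ a).aestronglyMeasurable.restrict)
  filter_upwards [ae_restrict_mem hSm] with q hq
  have hq : q.1 ^ 2 + q.2 ^ 2 < c ^ 2 * Δ ^ 2 := hq
  have hu : 0 < c ^ 2 * Δ ^ 2 - q.1 ^ 2 - q.2 ^ 2 := by linarith
  have hs : 0 < Real.sqrt (c ^ 2 * Δ ^ 2 - q.1 ^ 2 - q.2 ^ 2) := Real.sqrt_pos.mpr hu
  rw [Real.norm_of_nonneg (aux_prf_nonneg c Δ a hc ha.le q)]
  unfold prfDensity
  have hexp : Real.exp (-a * Δ + a / c * Real.sqrt (c ^ 2 * Δ ^ 2 - q.1 ^ 2 - q.2 ^ 2)) ≤ 1 := by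
    rw [Real.exp_le_one_iff]
    have h1 : a / c * Real.sqrt (c ^ 2 * Δ ^ 2 - q.1 ^ 2 - q.2 ^ 2) ≤ a / c * (c * Δ) :=
      mul_le_mul_of_nonneg_left (aux_sqrt_le c Δ hc hΔ q) (by positivity)
    have h2 : a / c * (c * Δ) = a * Δ := by field_simp
    linarith
  have hpi := Real.pi_pos
  calc a / (2 * π * c) *
        Real.exp (-a * Δ + a / c * Real.sqrt (c ^ 2 * Δ ^ 2 - q.1 ^ 2 - q.2 ^ 2)) /
        Real.sqrt (c ^ 2 * Δ ^ 2 - q.1 ^ 2 - q.2 ^ 2)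
      ≤ a / (2 * π * c) * 1 / Real.sqrt (c ^ 2 * Δ ^ 2 - q.1 ^ 2 - q.2 ^ 2) := by
        gcongr
    _ = a / (2 * π * c) * (1 / Real.sqrt (c ^ 2 * Δ ^ 2 - q.1 ^ 2 - q.2 ^ 2)) := by ring

lemma aux_Sm (c Δ : ℝ) (n : ℕ) :
    MeasurableSet {w : Fin n → ℝ × ℝ | ∀ i, (w i).1 ^ 2 + (w i).2 ^ 2 < c ^ 2 * Δ ^ 2} := by
  have : {w : Fin n → ℝ × ℝ | ∀ i, (w i).1 ^ 2 + (w i).2 ^ 2 < c ^ 2 * Δ ^ 2} =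
      ⋂ i, {w : Fin n → ℝ × ℝ | (w i).1 ^ 2 + (w i).2 ^ 2 < c ^ 2 * Δ ^ 2} := by
    ext w; simp [Set.mem_iInter]
  rw [this]
  exact MeasurableSet.iInter fun i => measurableSet_lt (by fun_prop) measurable_const

/-- L2 : the joint density is integrable. -/
lemma aux_L2 (c Δ a : ℝ) (hc : 0 < c) (hΔ : 0 < Δ) (ha : 0 < a) (n : ℕ) :
    IntegrableOn (fun w : Fin n → ℝ × ℝ => ∏ i, prfDensity c Δ a (w i))
      {w : Fin n → ℝ × ℝ | ∀ i, (w i).1 ^ 2 + (w i).2 ^ 2 < c ^ 2 * Δ ^ 2} := by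
  set S₀ : Set (ℝ × ℝ) := {q : ℝ × ℝ | q.1 ^ 2 + q.2 ^ 2 < c ^ 2 * Δ ^ 2} with hS₀
  have hS₀m : MeasurableSet S₀ := by
    have : S₀ = {q : ℝ × ℝ | q.1 ^ 2 + q.2 ^ 2 < (c * Δ) ^ 2} := by simp only [hS₀, mul_pow]
    rw [this]; exact aux_disc_measurableSet (c * Δ)
  rw [← integrable_indicator_iff (aux_Sm c Δ n)]
  have hind : {w : Fin n → ℝ × ℝ | ∀ i, (w i).1 ^ 2 + (w i).2 ^ 2 < c ^ 2 * Δ ^ 2}.indicator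
      (fun w : Fin n → ℝ × ℝ => ∏ i, prfDensity c Δ a (w i)) =
      fun w : Fin n → ℝ × ℝ => ∏ i, S₀.indicator (prfDensity c Δ a) (w i) := by
    funext w
    by_cases hw : w ∈ {w : Fin n → ℝ × ℝ | ∀ i, (w i).1 ^ 2 + (w i).2 ^ 2 < c ^ 2 * Δ ^ 2}
    · rw [Set.indicator_of_mem hw]
      exact Finset.prod_congr rfl fun i _ => (Set.indicator_of_mem (show w i ∈ S₀ from hw i) _).symm
    · rw [Set.indicator_of_notMem hw]
      have : ∃ i, (w i) ∉ S₀ := by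
        simp only [mem_setOf_eq, not_forall] at hw
        exact hw
      obtain ⟨i, hi⟩ := this
      exact (Finset.prod_eq_zero (Finset.mem_univ i) (Set.indicator_of_notMem hi _)).symm
  rw [hind]
  exact Integrable.fintype_prod (f := fun _ : Fin n => S₀.indicator (prfDensity c Δ a))
    fun i => (integrable_indicator_iff hS₀m).mpr (aux_L1 c Δ a hc hΔ ha)

/-- L3 : |T| times the joint density is integrable. -/
lemma aux_L3 (c Δ a : ℝ) (hc : 0 < c) (hΔ : 0 < Δ) (ha : 0 < a) (n : ℕ)
    (T : (Fin n → ℝ × ℝ) → ℝ) (hT : Measurable T)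
    (hTint : IntegrableOn (fun w : Fin n → ℝ × ℝ => T w ^ 2 * ∏ i, prfDensity c Δ a (w i))
      {w : Fin n → ℝ × ℝ | ∀ i, (w i).1 ^ 2 + (w i).2 ^ 2 < c ^ 2 * Δ ^ 2}) :
    IntegrableOn (fun w : Fin n → ℝ × ℝ => |T w| * ∏ i, prfDensity c Δ a (w i))
      {w : Fin n → ℝ × ℝ | ∀ i, (w i).1 ^ 2 + (w i).2 ^ 2 < c ^ 2 * Δ ^ 2} := by
  have hprodm : Measurable (fun w : Fin n → ℝ × ℝ => ∏ i, prfDensity c Δ a (w i)) :=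
    Finset.measurable_prod _ fun i _ => (aux_prf_meas c Δ a).comp (measurable_pi_apply i)
  apply Integrable.mono' (hTint.add (aux_L2 c Δ a hc hΔ ha n))
    ((hT.abs.mul hprodm).aestronglyMeasurable.restrict)
  filter_upwards [ae_restrict_mem (aux_Sm c Δ n)] with w _
  have hprodnn : 0 ≤ ∏ i, prfDensity c Δ a (w i) :=
    Finset.prod_nonneg fun i _ => aux_prf_nonneg c Δ a hc ha.le _
  show ‖|T w| * ∏ i, prfDensity c Δ a (w i)‖ ≤ T w ^ 2 * (∏ i, prfDensity c Δ a (w i)) + ∏ i, prfDensity c Δ a (w i)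
  rw [Real.norm_of_nonneg (mul_nonneg (abs_nonneg _) hprodnn)]
  have hTle : |T w| ≤ T w ^ 2 + 1 := by
    nlinarith [abs_nonneg (T w), sq_abs (T w), sq_nonneg (|T w| - 1)]
  calc |T w| * ∏ i, prfDensity c Δ a (w i)
      ≤ (T w ^ 2 + 1) * ∏ i, prfDensity c Δ a (w i) :=
        mul_le_mul_of_nonneg_right hTle hprodnn
    _ = T w ^ 2 * (∏ i, prfDensity c Δ a (w i)) + ∏ i, prfDensity c Δ a (w i) := by ring

set_option maxHeartbeats 1600000 in
/-- Differentiation under the integral sign in the pseudo-likelihood model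
(key step in the proof of the Cramér–Rao inequality, Theorem 3.4):
if `T` is measurable and square-integrable against the joint density
`q_λ(w) = ∏ᵢ p_λ(wᵢ)` for every `λ ∈ Θ = (λ₁, λ₂)`, then
`λ ↦ ∫ T q_λ` is differentiable on `Θ` with derivative
`∫ T q_λ (n/λ − nΔ + (1/c) Σᵢ √(u(wᵢ)))`. -/
theorem diff_under_integral_pseudo_likelihood
    (lam₁ lam₂ c Δ : ℝ) (h1 : 0 < lam₁) (h12 : lam₁ < lam₂) (hc : 0 < c) (hΔ : 0 < Δ)
    (n : ℕ) (hn : 1 ≤ n)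
    (T : (Fin n → ℝ × ℝ) → ℝ) (hT : Measurable T)
    (hint : ∀ lam ∈ Set.Ioo lam₁ lam₂,
      IntegrableOn (fun w : Fin n → ℝ × ℝ => T w ^ 2 * ∏ i, prfDensity c Δ lam (w i))
        {w : Fin n → ℝ × ℝ | ∀ i, (w i).1 ^ 2 + (w i).2 ^ 2 < c ^ 2 * Δ ^ 2}) :
    ∀ lam ∈ Set.Ioo lam₁ lam₂,
      HasDerivAt
        (fun μ : ℝ =>
          ∫ w in {w : Fin n → ℝ × ℝ | ∀ i, (w i).1 ^ 2 + (w i).2 ^ 2 < c ^ 2 * Δ ^ 2},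
            T w * ∏ i, prfDensity c Δ μ (w i))
        (∫ w in {w : Fin n → ℝ × ℝ | ∀ i, (w i).1 ^ 2 + (w i).2 ^ 2 < c ^ 2 * Δ ^ 2},
          T w * (∏ i, prfDensity c Δ lam (w i)) *
            ((n : ℝ) / lam - n * Δ +
              1 / c * ∑ i, Real.sqrt (c ^ 2 * Δ ^ 2 - (w i).1 ^ 2 - (w i).2 ^ 2)))
        lam := by
  intro lam hlam
  obtain ⟨hl1, hl2⟩ := hlam
  have hlam0 : 0 < lam := h1.trans hl1
  set S : Set (Fin n → ℝ × ℝ) :=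
    {w : Fin n → ℝ × ℝ | ∀ i, (w i).1 ^ 2 + (w i).2 ^ 2 < c ^ 2 * Δ ^ 2} with hSdef
  have hSm : MeasurableSet S := aux_Sm c Δ n
  obtain ⟨a, haI, halam⟩ : ∃ a, lam₁ < a ∧ a < lam :=
    ⟨(lam₁ + lam) / 2, by linarith, by linarith⟩
  have ha0 : 0 < a := h1.trans haI
  have hal2 : a < lam₂ := by linarith
  obtain ⟨ε, hε, hε1, hε2⟩ : ∃ ε, 0 < ε ∧ ε ≤ lam - a ∧ ε ≤ lam₂ - lam :=
    ⟨min (lam - a) (lam₂ - lam), lt_min (by linarith) (by linarith),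
      min_le_left _ _, min_le_right _ _⟩
  have hball : ∀ x ∈ Metric.ball lam ε, a < x ∧ x < lam₂ := by
    intro x hx
    rw [Metric.mem_ball, Real.dist_eq, abs_lt] at hx
    constructor <;> linarith [hx.1, hx.2]
  -- measurability helpers
  have hprodm : ∀ x : ℝ, Measurable (fun w : Fin n → ℝ × ℝ => ∏ i, prfDensity c Δ x (w i)) :=
    fun x => Finset.measurable_prod _ fun i _ =>
      (aux_prf_meas c Δ x).comp (measurable_pi_apply i)
  have hsqm : Measurable (fun w : Fin n → ℝ × ℝ =>
      ∑ i, Real.sqrt (c ^ 2 * Δ ^ 2 - (w i).1 ^ 2 - (w i).2 ^ 2)) :=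
    Finset.measurable_sum _ fun i _ => by fun_prop
  -- integrability of F lam
  have hF_int : Integrable (fun w : Fin n → ℝ × ℝ => T w * ∏ i, prfDensity c Δ lam (w i))
      (volume.restrict S) := by
    apply Integrable.mono' (aux_L3 c Δ lam hc hΔ hlam0 n T hT (hint lam ⟨hl1, hl2⟩))
      ((hT.mul (hprodm lam)).aestronglyMeasurable.restrict)
    apply Filter.Eventually.of_forall
    intro w
    have hpn : 0 ≤ ∏ i, prfDensity c Δ lam (w i) :=
      Finset.prod_nonneg fun i _ => aux_prf_nonneg c Δ lam hc hlam0.le _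
    show ‖T w * ∏ i, prfDensity c Δ lam (w i)‖ ≤ |T w| * ∏ i, prfDensity c Δ lam (w i)
    rw [Real.norm_eq_abs, abs_mul, abs_of_nonneg hpn]
  -- measurability of F'
  have hF'_meas : AEStronglyMeasurable
      (fun w : Fin n → ℝ × ℝ => T w * (∏ i, prfDensity c Δ lam (w i)) *
        ((n : ℝ) / lam - n * Δ +
          1 / c * ∑ i, Real.sqrt (c ^ 2 * Δ ^ 2 - (w i).1 ^ 2 - (w i).2 ^ 2)))
      (volume.restrict S) :=
    (((hT.mul (hprodm lam)).mul
      (measurable_const.add (hsqm.const_mul (1 / c)))).aestronglyMeasurable).restrict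
  -- bound
  obtain ⟨K, hKdef⟩ : ∃ K : ℝ, K = (lam₂ / a) ^ n * ((n : ℝ) / a + n * Δ + n * Δ) := ⟨_, rfl⟩
  have h_bound : ∀ᵐ w ∂(volume.restrict S), ∀ x ∈ Metric.ball lam ε,
      ‖T w * (∏ i, prfDensity c Δ x (w i)) *
        ((n : ℝ) / x - n * Δ +
          1 / c * ∑ i, Real.sqrt (c ^ 2 * Δ ^ 2 - (w i).1 ^ 2 - (w i).2 ^ 2))‖ ≤
      K * (|T w| * ∏ i, prfDensity c Δ a (w i)) := by
    filter_upwards [ae_restrict_mem hSm] with w hw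
    intro x hx
    obtain ⟨hax, hxl2⟩ := hball x hx
    have hx0 : 0 < x := ha0.trans hax
    have hu : ∀ i, 0 < c ^ 2 * Δ ^ 2 - (w i).1 ^ 2 - (w i).2 ^ 2 := by
      intro i; have := hw i; linarith
    have hs : ∀ i, 0 < Real.sqrt (c ^ 2 * Δ ^ 2 - (w i).1 ^ 2 - (w i).2 ^ 2) :=
      fun i => Real.sqrt_pos.mpr (hu i)
    have hsle : ∀ i, Real.sqrt (c ^ 2 * Δ ^ 2 - (w i).1 ^ 2 - (w i).2 ^ 2) ≤ c * Δ :=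
      fun i => aux_sqrt_le c Δ hc hΔ _
    have hpi := Real.pi_pos
    -- factorwise bound
    have hfac : ∀ i, prfDensity c Δ x (w i) ≤ (lam₂ / a) * prfDensity c Δ a (w i) := by
      intro i
      obtain ⟨s, hsd⟩ :
          ∃ s : ℝ, s = Real.sqrt (c ^ 2 * Δ ^ 2 - (w i).1 ^ 2 - (w i).2 ^ 2) := ⟨_, rfl⟩
      have hs0 : 0 < s := hsd ▸ hs i
      have hsc : s / c ≤ Δ := (div_le_iff₀ hc).mpr (by nlinarith [hsle i, hsd ▸ hsle i])
      have hexp : Real.exp (-x * Δ + x / c * s) ≤ Real.exp (-a * Δ + a / c * s) := by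
        rw [Real.exp_le_exp]
        have hkey : (x - a) * (s / c) ≤ (x - a) * Δ :=
          mul_le_mul_of_nonneg_left hsc (by linarith)
        have e1 : x / c * s = x * (s / c) := by ring
        have e2 : a / c * s = a * (s / c) := by ring
        nlinarith [hkey, e1, e2]
      unfold prfDensity
      rw [← hsd]
      rw [show (lam₂ / a) * (a / (2 * π * c) * Real.exp (-a * Δ + a / c * s) / s) =
          lam₂ / (2 * π * c) * Real.exp (-a * Δ + a / c * s) / s by
        field_simp [ha0.ne', hs0.ne', hpi.ne', hc.ne']]
      have hlam₂0 : 0 < lam₂ := by linarith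
      exact div_le_div_of_nonneg_right
        (mul_le_mul (div_le_div_of_nonneg_right hxl2.le (by positivity)) hexp
          (Real.exp_pos _).le (div_nonneg hlam₂0.le (by positivity)))
        hs0.le
    have hpnx : 0 ≤ ∏ i, prfDensity c Δ x (w i) :=
      Finset.prod_nonneg fun i _ => aux_prf_nonneg c Δ x hc hx0.le _
    have hpna : 0 ≤ ∏ i, prfDensity c Δ a (w i) :=
      Finset.prod_nonneg fun i _ => aux_prf_nonneg c Δ a hc ha0.le _
    have hprodle : ∏ i, prfDensity c Δ x (w i) ≤
        (lam₂ / a) ^ n * ∏ i, prfDensity c Δ a (w i) := by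
      calc ∏ i, prfDensity c Δ x (w i)
          ≤ ∏ i, ((lam₂ / a) * prfDensity c Δ a (w i)) :=
            Finset.prod_le_prod (fun i _ => aux_prf_nonneg c Δ x hc hx0.le _)
              (fun i _ => hfac i)
        _ = (lam₂ / a) ^ n * ∏ i, prfDensity c Δ a (w i) := by
            rw [Finset.prod_mul_distrib, Finset.prod_const, Finset.card_univ, Fintype.card_fin]
    -- bound on the score factor
    have hsum0 : 0 ≤ ∑ i, Real.sqrt (c ^ 2 * Δ ^ 2 - (w i).1 ^ 2 - (w i).2 ^ 2) :=
      Finset.sum_nonneg fun i _ => Real.sqrt_nonneg _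
    have hsumle : ∑ i, Real.sqrt (c ^ 2 * Δ ^ 2 - (w i).1 ^ 2 - (w i).2 ^ 2) ≤ n * (c * Δ) := by
      calc ∑ i, Real.sqrt (c ^ 2 * Δ ^ 2 - (w i).1 ^ 2 - (w i).2 ^ 2)
          ≤ ∑ _i : Fin n, (c * Δ) := Finset.sum_le_sum fun i _ => hsle i
        _ = n * (c * Δ) := by rw [Finset.sum_const, Finset.card_univ, Fintype.card_fin,
              nsmul_eq_mul]
    have h2 : 1 / c * ∑ i, Real.sqrt (c ^ 2 * Δ ^ 2 - (w i).1 ^ 2 - (w i).2 ^ 2) ≤ (n : ℝ) * Δ := by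
      rw [one_div_mul_eq_div, div_le_iff₀ hc]
      nlinarith
    have h3 : 0 ≤ 1 / c * ∑ i, Real.sqrt (c ^ 2 * Δ ^ 2 - (w i).1 ^ 2 - (w i).2 ^ 2) := by
      positivity
    have hnx : (n : ℝ) / x ≤ (n : ℝ) / a :=
      div_le_div_of_nonneg_left (by positivity) ha0 hax.le
    have hnx0 : 0 ≤ (n : ℝ) / x := div_nonneg (by positivity) hx0.le
    have hna0 : 0 ≤ (n : ℝ) / a := div_nonneg (by positivity) ha0.le
    have hnΔ0 : 0 ≤ (n : ℝ) * Δ := by positivity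
    have hfacbound : |(n : ℝ) / x - n * Δ +
        1 / c * ∑ i, Real.sqrt (c ^ 2 * Δ ^ 2 - (w i).1 ^ 2 - (w i).2 ^ 2)| ≤
        (n : ℝ) / a + n * Δ + n * Δ := by
      rw [abs_le]
      constructor <;> linarith
    rw [Real.norm_eq_abs, abs_mul, abs_mul, abs_of_nonneg hpnx]
    calc |T w| * (∏ i, prfDensity c Δ x (w i)) *
        |(n : ℝ) / x - n * Δ +
          1 / c * ∑ i, Real.sqrt (c ^ 2 * Δ ^ 2 - (w i).1 ^ 2 - (w i).2 ^ 2)|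
        ≤ |T w| * ((lam₂ / a) ^ n * ∏ i, prfDensity c Δ a (w i)) *
          ((n : ℝ) / a + n * Δ + n * Δ) := by
          apply mul_le_mul (mul_le_mul_of_nonneg_left hprodle (abs_nonneg _)) hfacbound
            (abs_nonneg _)
          have hlam₂0 : 0 < lam₂ := by linarith
          exact mul_nonneg (abs_nonneg _)
            (mul_nonneg (pow_nonneg (div_nonneg hlam₂0.le ha0.le) n) hpna)
      _ = K * (|T w| * ∏ i, prfDensity c Δ a (w i)) := by rw [hKdef]; ring
  have hbound_int : Integrable
      (fun w : Fin n → ℝ × ℝ => K * (|T w| * ∏ i, prfDensity c Δ a (w i)))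
      (volume.restrict S) :=
    (aux_L3 c Δ a hc hΔ ha0 n T hT (hint a ⟨haI, hal2⟩)).const_mul K
  -- differentiability
  have h_diff : ∀ᵐ w ∂(volume.restrict S), ∀ x ∈ Metric.ball lam ε,
      HasDerivAt (fun μ : ℝ => T w * ∏ i, prfDensity c Δ μ (w i))
        (T w * (∏ i, prfDensity c Δ x (w i)) *
          ((n : ℝ) / x - n * Δ +
            1 / c * ∑ i, Real.sqrt (c ^ 2 * Δ ^ 2 - (w i).1 ^ 2 - (w i).2 ^ 2))) x := by
    filter_upwards [ae_restrict_mem hSm] with w hw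
    intro x hx
    obtain ⟨hax, hxl2⟩ := hball x hx
    have hx0 : 0 < x := ha0.trans hax
    have hu : ∀ i, 0 < c ^ 2 * Δ ^ 2 - (w i).1 ^ 2 - (w i).2 ^ 2 := by
      intro i; have := hw i; linarith
    have hs : ∀ i, 0 < Real.sqrt (c ^ 2 * Δ ^ 2 - (w i).1 ^ 2 - (w i).2 ^ 2) :=
      fun i => Real.sqrt_pos.mpr (hu i)
    have hpi := Real.pi_pos
    obtain ⟨C, hCdef⟩ : ∃ C : ℝ,
        C = ∏ i, (1 / (2 * π * c * Real.sqrt (c ^ 2 * Δ ^ 2 - (w i).1 ^ 2 - (w i).2 ^ 2))) :=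
      ⟨_, rfl⟩
    obtain ⟨B, hBdef⟩ : ∃ B : ℝ,
        B = ∑ i, (-Δ + Real.sqrt (c ^ 2 * Δ ^ 2 - (w i).1 ^ 2 - (w i).2 ^ 2) / c) :=
      ⟨_, rfl⟩
    have heq' : ∀ μ : ℝ, ∏ i, prfDensity c Δ μ (w i) = C * (μ ^ n * Real.exp (μ * B)) := by
      intro μ
      have hfactor : ∀ i, prfDensity c Δ μ (w i) =
          μ * Real.exp (μ * (-Δ + Real.sqrt (c ^ 2 * Δ ^ 2 - (w i).1 ^ 2 - (w i).2 ^ 2) / c)) *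
          (1 / (2 * π * c * Real.sqrt (c ^ 2 * Δ ^ 2 - (w i).1 ^ 2 - (w i).2 ^ 2))) := by
        intro i
        unfold prfDensity
        rw [show -μ * Δ + μ / c * Real.sqrt (c ^ 2 * Δ ^ 2 - (w i).1 ^ 2 - (w i).2 ^ 2) =
          μ * (-Δ + Real.sqrt (c ^ 2 * Δ ^ 2 - (w i).1 ^ 2 - (w i).2 ^ 2) / c) by ring]
        ring
      calc ∏ i, prfDensity c Δ μ (w i)
          = ∏ i, (μ *
              Real.exp (μ * (-Δ + Real.sqrt (c ^ 2 * Δ ^ 2 - (w i).1 ^ 2 - (w i).2 ^ 2) / c)) *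
              (1 / (2 * π * c * Real.sqrt (c ^ 2 * Δ ^ 2 - (w i).1 ^ 2 - (w i).2 ^ 2)))) :=
            Finset.prod_congr rfl fun i _ => hfactor i
        _ = (∏ _i : Fin n, μ) *
            (∏ i, Real.exp (μ * (-Δ + Real.sqrt (c ^ 2 * Δ ^ 2 - (w i).1 ^ 2 - (w i).2 ^ 2) / c))) *
            C := by rw [hCdef, Finset.prod_mul_distrib, Finset.prod_mul_distrib]
        _ = μ ^ n * Real.exp (μ * B) * C := by
            rw [Finset.prod_const, Finset.card_univ, Fintype.card_fin, ← Real.exp_sum,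
              hBdef, Finset.mul_sum]
        _ = C * (μ ^ n * Real.exp (μ * B)) := by ring
    have hBval : B = -((n : ℝ) * Δ) +
        1 / c * ∑ i, Real.sqrt (c ^ 2 * Δ ^ 2 - (w i).1 ^ 2 - (w i).2 ^ 2) := by
      rw [hBdef, Finset.sum_add_distrib, Finset.sum_const, Finset.card_univ, Fintype.card_fin,
        nsmul_eq_mul, ← Finset.sum_div, one_div_mul_eq_div]
      ring
    have hDF : HasDerivAt (fun μ : ℝ => T w * ∏ i, prfDensity c Δ μ (w i))
        ((T w * C) * ((↑n * x ^ (n - 1)) * Real.exp (x * B) +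
          x ^ n * (Real.exp (x * B) * (1 * B)))) x := by
      have h0 : (fun μ : ℝ => T w * ∏ i, prfDensity c Δ μ (w i)) =
          fun μ : ℝ => (T w * C) * (μ ^ n * Real.exp (μ * B)) :=
        funext fun μ => by rw [heq' μ]; ring
      rw [h0]
      exact ((hasDerivAt_pow n x).mul (((hasDerivAt_id x).mul_const B).exp)).const_mul (T w * C)
    have hxn : x ^ n = x ^ (n - 1) * x := by rw [← pow_succ, Nat.sub_add_cancel hn]
    have hsplit : (n : ℝ) / x - n * Δ +
        1 / c * ∑ i, Real.sqrt (c ^ 2 * Δ ^ 2 - (w i).1 ^ 2 - (w i).2 ^ 2) =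
        (n : ℝ) / x + B := by rw [hBval]; ring
    have h1 : x * ((n : ℝ) / x) = n := by
      rw [← mul_div_assoc, mul_comm, mul_div_assoc, div_self hx0.ne', mul_one]
    have hpow : x ^ n * ((n : ℝ) / x) = n * x ^ (n - 1) := by
      rw [hxn, mul_assoc, h1]; ring
    have hval : T w * (∏ i, prfDensity c Δ x (w i)) *
        ((n : ℝ) / x - n * Δ +
          1 / c * ∑ i, Real.sqrt (c ^ 2 * Δ ^ 2 - (w i).1 ^ 2 - (w i).2 ^ 2)) =
        (T w * C) * ((↑n * x ^ (n - 1)) * Real.exp (x * B) +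
          x ^ n * (Real.exp (x * B) * (1 * B))) := by
      rw [heq' x, hsplit]
      calc T w * (C * (x ^ n * Real.exp (x * B))) * ((n : ℝ) / x + B)
          = T w * C * (x ^ n * ((n : ℝ) / x) * Real.exp (x * B) +
              x ^ n * Real.exp (x * B) * B) := by ring
        _ = (T w * C) * ((↑n * x ^ (n - 1)) * Real.exp (x * B) +
              x ^ n * (Real.exp (x * B) * (1 * B))) := by rw [hpow]; ring
    rw [hval]
    exact hDF
  have key := hasDerivAt_integral_of_dominated_loc_of_deriv_le
    (μ := volume.restrict S) (x₀ := lam)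
    (F := fun x (w : Fin n → ℝ × ℝ) => T w * ∏ i, prfDensity c Δ x (w i))
    (F' := fun x (w : Fin n → ℝ × ℝ) => T w * (∏ i, prfDensity c Δ x (w i)) *
      ((n : ℝ) / x - n * Δ +
        1 / c * ∑ i, Real.sqrt (c ^ 2 * Δ ^ 2 - (w i).1 ^ 2 - (w i).2 ^ 2)))
    (bound := fun w : Fin n → ℝ × ℝ => K * (|T w| * ∏ i, prfDensity c Δ a (w i)))
    (Metric.ball_mem_nhds lam hε)
    (Filter.Eventually.of_forall fun x =>
      ((hT.mul (hprodm x)).aestronglyMeasurable.restrict))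
    hF_int hF'_meas h_bound hbound_int h_diff
  exact key.2
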